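/- For every natural number n ≥ 3, the accurate domination number of the cycle C_n on n vertices satisfies γ_a(C_n) = ⌊n/3⌋ − ⌊3/n⌋ + 2. -/

import Mathlib

/-- `D` is a dominating set of the simple graph `G`: every vertex not in `D`
is adjacent to at least one vertex in `D`. -/
def IsDomSet {V : Type*} (G : SimpleGraph V) (D : Finset V) : Prop :=
  ∀ v : V, v ∉ D → ∃ u ∈ D, G.Adj u v

/-- `D` is an accurate dominating set of `G`: a dominating set such that no subset of
`V \ D` of cardinality `|D|` is a dominating set of `G`. -/
def IsAccDomSet {V : Type*} (G : SimpleGraph V) (D : Finset V) : Prop :=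
  IsDomSet G D ∧
    ∀ E : Finset V, (∀ v ∈ E, v ∉ D) → E.card = D.card → ¬ IsDomSet G E

/-- The domination number of `G`: the minimum cardinality of a dominating set. -/
noncomputable def domNum {V : Type*} (G : SimpleGraph V) : ℕ :=
  sInf {k | ∃ D : Finset V, IsDomSet G D ∧ D.card = k}

/-- The accurate domination number of `G`: the minimum cardinality of an accurate
dominating set. -/
noncomputable def accDomNum {V : Type*} (G : SimpleGraph V) : ℕ :=
  sInf {k | ∃ D : Finset V, IsAccDomSet G D ∧ D.card = k}

/-- `d(G,i)`: the number of dominating sets of `G` of cardinality `i`. -/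
noncomputable def numDomSets {V : Type*} (G : SimpleGraph V) (i : ℕ) : ℕ :=
  Set.ncard {D : Finset V | IsDomSet G D ∧ D.card = i}

/-- `d_a(G,i)`: the number of accurate dominating sets of `G` of cardinality `i`. -/
noncomputable def numAccDomSets {V : Type*} (G : SimpleGraph V) (i : ℕ) : ℕ :=
  Set.ncard {D : Finset V | IsAccDomSet G D ∧ D.card = i}

open Finset SimpleGraph Fin.CommRing

variable {m : ℕ}

lemma adj313 {u v : Fin (m+3)} : (cycleGraph (m+3)).Adj u v ↔ u - v = 1 ∨ v - u = 1 :=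
  cycleGraph_adj

lemma fin_two_ne_zero : (2 : Fin (m+3)) ≠ 0 := by simp [Fin.ext_iff]; rw [Nat.mod_eq_of_lt (by omega)]; omega

/-- shifting a dominating set by +1 gives a dominating set -/
lemma dom_shift {D : Finset (Fin (m+3))} (h : IsDomSet (cycleGraph (m+3)) D) :
    IsDomSet (cycleGraph (m+3)) (D.image (· + 1)) := by
  intro v hv
  have hv1 : v - 1 ∉ D := by
    intro h1
    exact hv (mem_image.mpr ⟨v - 1, h1, by ring⟩)
  obtain ⟨u, hu, hadj⟩ := h (v - 1) hv1
  refine ⟨u + 1, mem_image.mpr ⟨u, hu, rfl⟩, ?_⟩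
  rw [adj313] at hadj ⊢
  rcases hadj with h' | h'
  · left; linear_combination h'
  · right; linear_combination h'

lemma card_shift (D : Finset (Fin (m+3))) : (D.image (· + 1)).card = D.card :=
  Finset.card_image_of_injective _ (add_left_injective 1)

/-- closed neighborhoods of a dominating set cover -/
lemma cover {D : Finset (Fin (m+3))} (h : IsDomSet (cycleGraph (m+3)) D) (v : Fin (m+3)) :
    ∃ u ∈ D, v ∈ ({u - 1, u, u + 1} : Finset (Fin (m+3))) := by
  by_cases hv : v ∈ D
  · exact ⟨v, hv, by simp⟩
  · obtain ⟨u, hu, hadj⟩ := h v hv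
    rw [adj313] at hadj
    refine ⟨u, hu, ?_⟩
    simp only [mem_insert, mem_singleton]
    rcases hadj with h' | h'
    · left; linear_combination -h'
    · right; right; linear_combination h'

lemma cover_aux {D : Finset (Fin (m+3))} {d e : Fin (m+3)}
    (hd1 : d + 1 ∈ D) (he1 : e + 1 ∈ D) (hde : d ≠ e) {v : Fin (m+3)}
    (hv : v ∈ ({d - 1, d, d + 1} : Finset (Fin (m+3)))) :
    v ∈ ((D.erase d).erase e).biUnion (fun u => ({u - 1, u, u + 1} : Finset (Fin (m+3))))
      ∪ ({d - 1, e - 1} : Finset (Fin (m+3))) := by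
  simp only [mem_insert, mem_singleton] at hv
  have hmem : ∀ u : Fin (m+3), u ∈ D → u ≠ d → u ≠ e →
      ∀ w, w ∈ ({u - 1, u, u + 1} : Finset (Fin (m+3))) →
      w ∈ ((D.erase d).erase e).biUnion (fun u => ({u - 1, u, u + 1} : Finset (Fin (m+3))))
        ∪ ({d - 1, e - 1} : Finset (Fin (m+3))) := by
    intro u hu hud hue w hw
    exact mem_union_left _ (mem_biUnion.mpr ⟨u, by simp [mem_erase, hud, hue, hu], hw⟩)
  rcases hv with hv | hv | hv
  · rw [hv]; exact mem_union_right _ (by simp)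
  · -- v = d
    by_cases h : d + 1 = e
    · have hve : v = e - 1 := by rw [hv]; linear_combination h
      rw [hve]
      exact mem_union_right _ (by simp)
    · refine hmem (d + 1) hd1 (by simp) h v ?_
      simp only [mem_insert, mem_singleton]; left; rw [hv]; ring
  · -- v = d + 1
    by_cases h : d + 1 = e
    · by_cases h2 : e + 1 = d
      · exfalso
        have : (2 : Fin (m+3)) = 0 := by linear_combination h + h2
        exact fin_two_ne_zero this
      · refine hmem (e + 1) he1 h2 (by simp) v ?_
        simp only [mem_insert, mem_singleton]; left; rw [hv]; linear_combination h
    · refine hmem (d + 1) hd1 (by simp) h v ?_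
      simp only [mem_insert, mem_singleton]; right; left; exact hv

lemma two_pairs {D : Finset (Fin (m+3))} (hdom : IsDomSet (cycleGraph (m+3)) D)
    {d e : Fin (m+3)} (hd : d ∈ D) (hd1 : d + 1 ∈ D) (he : e ∈ D) (he1 : e + 1 ∈ D)
    (hde : d ≠ e) : m + 3 + 4 ≤ 3 * D.card := by
  set N : Fin (m+3) → Finset (Fin (m+3)) := fun u => ({u - 1, u, u + 1} : Finset (Fin (m+3))) with hN
  have hsub : (univ : Finset (Fin (m+3))) ⊆
      ((D.erase d).erase e).biUnion N ∪ ({d - 1, e - 1} : Finset (Fin (m+3))) := by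
    intro v _
    obtain ⟨u, hu, hvN⟩ := cover hdom v
    by_cases hud : u = d
    · exact cover_aux hd1 he1 hde (hud ▸ hvN)
    · by_cases hue : u = e
      · have := cover_aux (d := e) (e := d) he1 hd1 (Ne.symm hde) (hue ▸ hvN)
        rwa [Finset.erase_right_comm, Finset.pair_comm (e-1) (d-1)] at this
      · exact mem_union_left _ (mem_biUnion.mpr ⟨u, by simp [mem_erase, hud, hue, hu], hvN⟩)
  have hcard1 : m + 3 ≤ (((D.erase d).erase e).biUnion N).card + 2 := by
    have h1 := Finset.card_le_card hsub
    have h2 := Finset.card_union_le (((D.erase d).erase e).biUnion N)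
      ({d - 1, e - 1} : Finset (Fin (m+3)))
    have h3 : ({d - 1, e - 1} : Finset (Fin (m+3))).card ≤ 2 := Finset.card_insert_le _ _ |>.trans (by simp)
    simp only [card_univ, Fintype.card_fin] at h1
    omega
  have hcard2 : (((D.erase d).erase e).biUnion N).card ≤ 3 * ((D.erase d).erase e).card := by
    refine (Finset.card_biUnion_le).trans ?_
    rw [mul_comm]
    refine Finset.sum_le_card_nsmul _ _ 3 ?_
    intro u _
    exact (Finset.card_insert_le _ _).trans (by simp [Nat.add_le_add_iff_left, Finset.card_insert_le])
  have he' : e ∈ D.erase d := mem_erase.mpr ⟨Ne.symm hde, he⟩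
  have hc1 : (D.erase d).card = D.card - 1 := card_erase_of_mem hd
  have hc2 : ((D.erase d).erase e).card = (D.erase d).card - 1 := card_erase_of_mem he'
  have hDpos : 1 ≤ D.card := card_pos.mpr ⟨d, hd⟩
  have hD2 : 2 ≤ D.card := by
    have := Finset.card_pos.mpr ⟨e, he'⟩
    omega
  omega

lemma exists_disjoint_dom {D : Finset (Fin (m+3))} (hdom : IsDomSet (cycleGraph (m+3)) D)
    (h3 : 3 * D.card ≤ m + 6) (h2 : 2 * D.card ≤ m + 3) :
    ∃ E : Finset (Fin (m+3)), (∀ v ∈ E, v ∉ D) ∧ E.card = D.card ∧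
      IsDomSet (cycleGraph (m+3)) E := by
  by_cases hpair : ∃ d : Fin (m+3), d ∈ D ∧ d + 1 ∈ D
  · obtain ⟨d, hd, hd1⟩ := hpair
    have huniq : ∀ e, e ∈ D → e + 1 ∈ D → e = d := by
      intro e he he1
      by_contra hne
      have := two_pairs hdom he he1 hd hd1 hne
      omega
    set I := D.image (· + 1) with hI
    have hcardI : I.card = D.card := card_shift D
    have hd1I : d + 1 ∈ I := mem_image.mpr ⟨d, hd, rfl⟩
    have hd2E' : d + 2 ∈ I.erase (d+1) := by
      refine mem_erase.mpr ⟨?_, mem_image.mpr ⟨d+1, hd1, by ring⟩⟩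
      intro h
      have h1 : (1 : Fin (m+3)) = 0 := by linear_combination h
      simp at h1
    have herase_sub : ∀ v ∈ I.erase (d+1), v ∉ D := by
      intro v hv hvD
      obtain ⟨hne, hvI⟩ := mem_erase.mp hv
      obtain ⟨u, hu, hueq⟩ := mem_image.mp hvI
      rw [← hueq] at hvD hne
      exact hne (by rw [huniq u hu hvD])
    have hdm1_ne : d - 1 ≠ d + 1 := by
      intro h
      have h1 : (2 : Fin (m+3)) = 0 := by linear_combination -h
      exact fin_two_ne_zero h1
    have hDpos : 1 ≤ D.card := card_pos.mpr ⟨d, hd⟩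
    have main : ∀ y : Fin (m+3), y ∉ D → y ∉ I →
        d - 1 ∈ insert y (I.erase (d+1)) →
        ∃ E : Finset (Fin (m+3)), (∀ v ∈ E, v ∉ D) ∧ E.card = D.card ∧
          IsDomSet (cycleGraph (m+3)) E := by
      intro y hyD hyI hdm1E
      refine ⟨insert y (I.erase (d+1)), ?_, ?_, ?_⟩
      · intro v hv
        rcases mem_insert.mp hv with rfl | hv'
        · exact hyD
        · exact herase_sub v hv'
      · rw [card_insert_of_notMem (fun h => hyI (mem_of_mem_erase h)),
          card_erase_of_mem hd1I, hcardI]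
        omega
      · intro v hv
        have hvne_d2 : v ≠ d + 2 := by
          intro h; exact hv (h ▸ mem_insert_of_mem hd2E')
        by_cases hvd : v = d
        · refine ⟨d - 1, hdm1E, ?_⟩
          rw [adj313, hvd]
          right; ring
        · by_cases hvd1 : v = d + 1
          · refine ⟨d + 2, mem_insert_of_mem hd2E', ?_⟩
            rw [adj313, hvd1]
            left; ring
          · have hvI : v ∉ I := fun h =>
              hv (mem_insert_of_mem (mem_erase.mpr ⟨hvd1, h⟩))
            have hvm1 : v - 1 ∉ D := fun h => hvI (mem_image.mpr ⟨v - 1, h, by ring⟩)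
            obtain ⟨u, hu, hadj⟩ := hdom (v - 1) hvm1
            rw [adj313] at hadj
            by_cases hud : u = d
            · exfalso
              rw [hud] at hadj
              rcases hadj with h' | h'
              · exact hvd (by linear_combination -h')
              · exact hvne_d2 (by linear_combination h')
            · refine ⟨u + 1, mem_insert_of_mem (mem_erase.mpr
                ⟨fun h => hud (add_right_cancel h), mem_image.mpr ⟨u, hu, rfl⟩⟩), ?_⟩
              rw [adj313]
              rcases hadj with h' | h'
              · left; linear_combination h'
              · right; linear_combination h'
    by_cases hb : d - 2 ∈ D
    · -- find a fresh vertex x outside D ∪ I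
      have hinter : d + 1 ∈ D ∩ I := mem_inter.mpr ⟨hd1, hd1I⟩
      have hU : (D ∪ I).card < (univ : Finset (Fin (m+3))).card := by
        have h4 := Finset.card_union_add_card_inter D I
        have h5 : 1 ≤ (D ∩ I).card := card_pos.mpr ⟨d + 1, hinter⟩
        simp only [card_univ, Fintype.card_fin]
        omega
      have hns : ¬ (univ : Finset (Fin (m+3))) ⊆ D ∪ I :=
        fun h => absurd (Finset.card_le_card h) (by omega)
      obtain ⟨x, -, hx⟩ := Finset.not_subset.mp hns
      have hxD : x ∉ D := fun h => hx (mem_union_left _ h)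
      have hxI : x ∉ I := fun h => hx (mem_union_right _ h)
      refine main x hxD hxI ?_
      refine mem_insert_of_mem (mem_erase.mpr ⟨hdm1_ne, mem_image.mpr ⟨d - 2, hb, by ring⟩⟩)
    · refine main (d - 1) ?_ ?_ (mem_insert_self _ _)
      · intro h
        have := huniq (d - 1) h (by rw [sub_add_cancel]; exact hd)
        have h1 : (1 : Fin (m+3)) = 0 := by linear_combination -this
        simp at h1
      · intro h
        obtain ⟨u, hu, hueq⟩ := mem_image.mp h
        have : u = d - 2 := by linear_combination hueq
        exact hb (this ▸ hu)
  · refine ⟨D.image (· + 1), ?_, card_shift D, dom_shift hdom⟩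
    intro v hv hvD
    obtain ⟨u, hu, rfl⟩ := mem_image.mp hv
    exact hpair ⟨u, hu, hvD⟩

lemma upper_acc {m : ℕ} (hm : 1 ≤ m) :
    ∃ D : Finset (Fin (m+3)), IsAccDomSet (SimpleGraph.cycleGraph (m+3)) D ∧
      D.card = (m+3)/3 + 2 := by
  set q := (m+3)/3 with hqdef
  refine ⟨univ.filter (fun v => v.val < 3 ∨ (v.val % 3 = 2 ∧ v.val < 3 * q)), ⟨?_, ?_⟩, ?_⟩
  · -- dominating
    intro v hv
    simp only [mem_filter, mem_univ, true_and] at hv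
    push_neg at hv
    obtain ⟨h1, h2⟩ := hv
    by_cases hlast : v.val = m + 2
    · refine ⟨v + 1, ?_, by rw [adj313]; left; ring⟩
      simp only [mem_filter, mem_univ, true_and]
      left
      have hvl : v = Fin.last (m+2) := Fin.ext (by simpa using hlast)
      rw [Fin.val_add_one, if_pos hvl]
      omega
    · have hvlt : v.val < m + 3 := v.isLt
      have hval1 : (v + 1).val = v.val + 1 := by
        rw [Fin.val_add_one, if_neg (fun h => hlast (by rw [h]; rfl))]
      have hvne0 : v ≠ 0 := by
        intro h
        rw [h] at h1
        simp at h1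
      have hvalm1 : (v - 1).val = v.val - 1 := by rw [Fin.coe_sub_one, if_neg hvne0]
      by_cases hr2 : v.val % 3 = 2
      · exfalso
        have := h2 hr2
        omega
      · by_cases hr1 : v.val % 3 = 1
        · refine ⟨v + 1, ?_, by rw [adj313]; left; ring⟩
          simp only [mem_filter, mem_univ, true_and]
          right
          rw [hval1]
          omega
        · refine ⟨v - 1, ?_, by rw [adj313]; right; ring⟩
          simp only [mem_filter, mem_univ, true_and]
          rw [hvalm1]
          omega
  · -- no disjoint set of same size dominates
    intro E hE hcard hdomE
    have h1D : (1 : Fin (m+3)) ∈ univ.filter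
        (fun v : Fin (m+3) => v.val < 3 ∨ (v.val % 3 = 2 ∧ v.val < 3 * q)) := by
      simp only [mem_filter, mem_univ, true_and]
      left
      rw [Fin.val_one]
      omega
    have h1E : (1 : Fin (m+3)) ∉ E := fun h => hE 1 h h1D
    obtain ⟨u, hu, hadj⟩ := hdomE 1 h1E
    rw [adj313] at hadj
    have huD : u ∈ univ.filter
        (fun v : Fin (m+3) => v.val < 3 ∨ (v.val % 3 = 2 ∧ v.val < 3 * q)) := by
      simp only [mem_filter, mem_univ, true_and]
      left
      rcases hadj with h' | h'
      · have hu2 : u = 2 := by linear_combination h'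
        rw [hu2, Fin.val_two]
        omega
      · have hu0 : u = 0 := by linear_combination -h'
        rw [hu0]
        simp
    exact hE u hu huD
  · -- cardinality
    have hcard : (univ.filter
        (fun v : Fin (m+3) => v.val < 3 ∨ (v.val % 3 = 2 ∧ v.val < 3 * q))).card
        = ((range (m+3)).filter (fun a => a < 3 ∨ (a % 3 = 2 ∧ a < 3 * q))).card := by
      apply Finset.card_bij (fun v _ => v.val)
      · intro v hv
        simp only [mem_filter, mem_univ, true_and] at hv
        simp only [mem_filter, mem_range]
        exact ⟨v.isLt, hv⟩
      · intro a _ b _ h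
        exact Fin.val_injective h
      · intro a ha
        simp only [mem_filter, mem_range] at ha
        exact ⟨⟨a, ha.1⟩, by simp only [mem_filter, mem_univ, true_and]; exact ha.2, rfl⟩
    rw [hcard]
    have him : (range (m+3)).filter (fun a => a < 3 ∨ (a % 3 = 2 ∧ a < 3 * q))
        = (range (q + 2)).image (fun j => if j < 3 then j else 3 * j - 4) := by
      ext a
      simp only [mem_filter, mem_range, mem_image]
      constructor
      · rintro ⟨ha, hp⟩
        by_cases h3 : a < 3
        · exact ⟨a, by omega, by rw [if_pos h3]⟩
        · refine ⟨(a + 4) / 3, by omega, ?_⟩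
          rw [if_neg (by omega)]
          omega
      · rintro ⟨j, hj, rfl⟩
        split_ifs with h
        · omega
        · omega
    rw [him, Finset.card_image_of_injOn, Finset.card_range]
    intro a ha b hb h
    simp only [coe_range, Set.mem_Iio] at ha hb
    dsimp only at h
    split_ifs at h <;> omega

/-- For every `n ≥ 3`, the accurate domination number of the cycle `C_n` equals
`⌊n/3⌋ - ⌊3/n⌋ + 2`. -/
theorem accDomNum_cycleGraph (n : ℕ) (hn : 3 ≤ n) :
    accDomNum (SimpleGraph.cycleGraph n) = n / 3 - 3 / n + 2 := by
  obtain ⟨m, rfl⟩ : ∃ m, n = m + 3 := ⟨n - 3, by omega⟩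
  have hlow : ∀ b ∈ {k | ∃ D : Finset (Fin (m+3)),
      IsAccDomSet (SimpleGraph.cycleGraph (m+3)) D ∧ D.card = k},
      (m+3) / 3 - 3 / (m+3) + 2 ≤ b := by
    rintro b ⟨D, hacc, rfl⟩
    by_contra hlt
    push_neg at hlt
    have h32 : 3 * D.card ≤ m + 6 ∧ 2 * D.card ≤ m + 3 := by
      rcases Nat.eq_zero_or_pos m with rfl | hm
      · norm_num at hlt
        omega
      · have h0 : 3 / (m+3) = 0 := Nat.div_eq_of_lt (by omega)
        rw [h0] at hlt
        omega
    obtain ⟨E, hE1, hE2, hE3⟩ := exists_disjoint_dom hacc.1 h32.1 h32.2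
    exact hacc.2 E hE1 hE2 hE3
  apply le_antisymm
  · -- upper bound
    rcases Nat.eq_zero_or_pos m with rfl | hm
    · have h2 : (0+3) / 3 - 3 / (0+3) + 2 = 2 := by norm_num
      rw [h2]
      apply Nat.sInf_le
      refine ⟨({0, 1} : Finset (Fin 3)), ?_, by decide⟩
      unfold IsAccDomSet IsDomSet
      decide
    · obtain ⟨D, hD, hDcard⟩ := upper_acc hm
      have h0 : 3 / (m+3) = 0 := Nat.div_eq_of_lt (by omega)
      rw [h0]
      apply Nat.sInf_le
      exact ⟨D, hD, by omega⟩
  · -- lower bound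
    apply le_csInf
    · refine ⟨(m+3), (univ : Finset (Fin (m+3))), ⟨?_, ?_⟩, by simp⟩
      · intro v hv
        exact absurd (mem_univ v) hv
      · intro E hE hcard _
        have hempty : E = ∅ := eq_empty_of_forall_notMem (fun v hv => hE v hv (mem_univ v))
        rw [hempty, card_empty, card_univ, Fintype.card_fin] at hcard
        omega
    · exact hlow
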